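/- Let r > 0, X be a sequentially complete Hausdorff locally convex space, (T(t))_{t≥0} a strongly continuous locally equicontinuous semigroup on X with generator (A, D(A)), f ∈ C([0,r];X) and x ∈ X. If the abstract Cauchy problem u'(t) = Au(t) + f(t) on [0,r], u(0) = x, has a strict solution u, then x ∈ D(A), Au ∈ C([0,r];X), the strict solution is unique, and u(t) = T(t)x + ∫_0^t T(t−s) f(s) ds for all t ∈ [0,r]. -/

import Mathlib

open Filter Topology Set Classical
open scoped ENNReal

/-- A partition `a = d₀ < d₁ < ⋯ < dₙ = b` of the interval `[a,b]`. -/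
structure IntervalPartition (a b : ℝ) where
  n : ℕ
  points : ℕ → ℝ
  first_eq : points 0 = a
  last_eq : points n = b
  increasing : ∀ i, i < n → points i < points (i + 1)

section Defs

variable {X Y U : Type*}
variable [AddCommGroup X] [Module ℝ X] [UniformSpace X] [IsUniformAddGroup X] [ContinuousSMul ℝ X]
variable [AddCommGroup Y] [Module ℝ Y] [UniformSpace Y] [IsUniformAddGroup Y] [ContinuousSMul ℝ Y]
variable [AddCommGroup U] [Module ℝ U] [UniformSpace U] [IsUniformAddGroup U] [ContinuousSMul ℝ U]

/-- The semivariation `SV_{q,p}(α)` of `α : [a,b] → L(X;Y)` (value in `ℝ≥0∞`). -/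
noncomputable def SV (α : ℝ → X →L[ℝ] Y) (q : Seminorm ℝ Y) (p : Seminorm ℝ X)
    (a b : ℝ) : ℝ≥0∞ :=
  ⨆ (d : IntervalPartition a b) (x : ℕ → X) (_ : ∀ i, i < d.n → p (x i) ≤ 1),
    ENNReal.ofReal
      (q (∑ i ∈ Finset.range d.n,
        (α (d.points (i + 1)) (x i) - α (d.points i) (x i))))

/-- `α : [a,b] → L(X;Y)` is of bounded semivariation. -/
def BoundedSemivariation (α : ℝ → X →L[ℝ] Y) (a b : ℝ) : Prop :=
  ∀ q : Seminorm ℝ Y, Continuous ⇑q →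
    ∃ p : Seminorm ℝ X, Continuous ⇑p ∧ SV α q p a b < ⊤

/-- `y` is the Riemann–Stieltjes integral `∫_a^b f dα`. -/
def IsRSIntegral (α : ℝ → X →L[ℝ] Y) (f : ℝ → X) (a b : ℝ) (y : Y) : Prop :=
  ∀ q : Seminorm ℝ Y, Continuous ⇑q → ∀ ε : ℝ, 0 < ε → ∃ δ : ℝ, 0 < δ ∧
    ∀ (d : IntervalPartition a b) (c : ℕ → ℝ),
      (∀ i, i < d.n → d.points (i + 1) - d.points i < δ) →
      (∀ i, i < d.n → c i ∈ Set.Icc (d.points i) (d.points (i + 1))) →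
      q ((∑ i ∈ Finset.range d.n,
        (α (d.points (i + 1)) (f (c i)) - α (d.points i) (f (c i)))) - y) < ε

/-- The Riemann–Stieltjes integral `∫_a^b f dα` (junk value `0` if it does not exist). -/
noncomputable def RSIntegral (α : ℝ → X →L[ℝ] Y) (f : ℝ → X) (a b : ℝ) : Y :=
  if h : ∃ y, IsRSIntegral α f a b y then h.choose else 0

/-- `y` is the Riemann integral `∫_a^b f(s) ds`. -/
def IsRiemannIntegral (f : ℝ → X) (a b : ℝ) (y : X) : Prop :=
  ∀ q : Seminorm ℝ X, Continuous ⇑q → ∀ ε : ℝ, 0 < ε → ∃ δ : ℝ, 0 < δ ∧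
    ∀ (d : IntervalPartition a b) (c : ℕ → ℝ),
      (∀ i, i < d.n → d.points (i + 1) - d.points i < δ) →
      (∀ i, i < d.n → c i ∈ Set.Icc (d.points i) (d.points (i + 1))) →
      q ((∑ i ∈ Finset.range d.n, (d.points (i + 1) - d.points i) • f (c i)) - y) < ε

/-- The Riemann integral `∫_a^b f(s) ds` (junk value `0` if it does not exist). -/
noncomputable def riemannIntegral (f : ℝ → X) (a b : ℝ) : X :=
  if h : ∃ y, IsRiemannIntegral f a b y then h.choose else 0

/-- Sequential completeness: every Cauchy sequence converges. -/
def SequentiallyComplete (Z : Type*) [UniformSpace Z] : Prop :=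
  ∀ u : ℕ → Z, CauchySeq u → ∃ z, Filter.Tendsto u Filter.atTop (𝓝 z)

/-- A strongly continuous, locally equicontinuous semigroup. -/
def IsSCLESemigroup (T : ℝ → X →L[ℝ] X) : Prop :=
  T 0 = ContinuousLinearMap.id ℝ X ∧
  (∀ s t : ℝ, 0 ≤ s → 0 ≤ t → T (s + t) = (T s).comp (T t)) ∧
  (∀ x : X, ContinuousOn (fun t => T t x) (Set.Ici (0:ℝ))) ∧
  (∀ q : Seminorm ℝ X, Continuous ⇑q → ∀ t₀ : ℝ, 0 ≤ t₀ →
    ∃ p : Seminorm ℝ X, Continuous ⇑p ∧ ∃ C : ℝ, 0 ≤ C ∧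
      ∀ t ∈ Set.Icc (0:ℝ) t₀, ∀ x : X, q (T t x) ≤ C * p x)

/-- A strongly continuous, quasi-equicontinuous semigroup. -/
def IsSCQESemigroup (T : ℝ → X →L[ℝ] X) : Prop :=
  T 0 = ContinuousLinearMap.id ℝ X ∧
  (∀ s t : ℝ, 0 ≤ s → 0 ≤ t → T (s + t) = (T s).comp (T t)) ∧
  (∀ x : X, ContinuousOn (fun t => T t x) (Set.Ici (0:ℝ))) ∧
  (∃ ω : ℝ, ∀ q : Seminorm ℝ X, Continuous ⇑q →
    ∃ p : Seminorm ℝ X, Continuous ⇑p ∧ ∃ C : ℝ, 0 ≤ C ∧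
      ∀ t : ℝ, 0 ≤ t → ∀ x : X, q (Real.exp (-ω * t) • T t x) ≤ C * p x)

/-- The domain of the generator of a semigroup. -/
def genDomain (T : ℝ → X →L[ℝ] X) : Set X :=
  {x | ∃ y : X, Filter.Tendsto (fun t : ℝ => t⁻¹ • (T t x - x)) (𝓝[>] (0:ℝ)) (𝓝 y)}

/-- The generator of a semigroup (junk value `0` outside of its domain). -/
noncomputable def generator (T : ℝ → X →L[ℝ] X) (x : X) : X :=
  if h : ∃ y : X, Filter.Tendsto (fun t : ℝ => t⁻¹ • (T t x - x)) (𝓝[>] (0:ℝ)) (𝓝 y)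
  then h.choose else 0

/-- The convolution `(T∗f)(t) = ∫_0^t T(t-s) f(s) ds`. -/
noncomputable def sgConv (T : ℝ → X →L[ℝ] X) (f : ℝ → X) (t : ℝ) : X :=
  riemannIntegral (fun s => T (t - s) (f s)) 0 t

/-- `v` is the derivative of `u` at `t` within the set `s` (limit of difference quotients). -/
def HasDerivWithinSetLC (u : ℝ → X) (v : X) (s : Set ℝ) (t : ℝ) : Prop :=
  Filter.Tendsto (fun h : ℝ => h⁻¹ • (u (t + h) - u t))
    (𝓝[{h : ℝ | h ≠ 0 ∧ t + h ∈ s}] (0:ℝ)) (𝓝 v)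

/-- `u` is continuously differentiable on `s` with derivative `u'`. -/
def IsC1On (u u' : ℝ → X) (s : Set ℝ) : Prop :=
  ContinuousOn u s ∧ ContinuousOn u' s ∧ ∀ t ∈ s, HasDerivWithinSetLC u (u' t) s t

/-- `u` is a strict solution of `u' = Au + g` on `[0,r]`, `u(0) = x`. -/
def IsStrictSolution (T : ℝ → X →L[ℝ] X) (g : ℝ → X) (x : X) (r : ℝ) (u : ℝ → X) : Prop :=
  u 0 = x ∧ (∀ t ∈ Set.Icc (0:ℝ) r, u t ∈ genDomain T) ∧
  ∃ u' : ℝ → X, IsC1On u u' (Set.Icc (0:ℝ) r) ∧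
    ∀ t ∈ Set.Icc (0:ℝ) r, u' t = generator T (u t) + g t

/-- `(T(t))` satisfies C-maximal regularity for `(B,r)`. -/
def CMaxReg (T : ℝ → X →L[ℝ] X) (B : U →L[ℝ] X) (r : ℝ) : Prop :=
  ∀ f : ℝ → U, ContinuousOn f (Set.Icc (0:ℝ) r) →
    (∀ t ∈ Set.Icc (0:ℝ) r, sgConv T (fun s => B (f s)) t ∈ genDomain T) ∧
    ContinuousOn (fun t => generator T (sgConv T (fun s => B (f s)) t)) (Set.Icc (0:ℝ) r)

end Defs
/-! ### Auxiliary lemmas -/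

section Aux

lemma IntervalPartition.mono {a b : ℝ} (d : IntervalPartition a b) {i j : ℕ} (hij : i ≤ j) (hj : j ≤ d.n) :
    d.points i ≤ d.points j := by
  induction j with
  | zero => simp_all
  | succ k ih =>
    rcases Nat.eq_or_lt_of_le hij with rfl | h
    · exact le_rfl
    · exact (ih (Nat.lt_succ_iff.mp h) (by omega)).trans
        (le_of_lt (d.increasing k (by omega)))

lemma IntervalPartition.mem_Icc' {a b : ℝ} (d : IntervalPartition a b) {i : ℕ} (hi : i ≤ d.n) :
    d.points i ∈ Set.Icc a b :=
  ⟨le_trans (le_of_eq d.first_eq.symm) (d.mono (Nat.zero_le i) hi),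
   le_trans (d.mono hi le_rfl) (le_of_eq d.last_eq)⟩

lemma IntervalPartition.n_eq_zero {a : ℝ} (d : IntervalPartition a a) : d.n = 0 := by
  by_contra h
  have h1 : d.points 0 < d.points d.n :=
    lt_of_lt_of_le (d.increasing 0 (by omega)) (d.mono (by omega) le_rfl)
  rw [d.first_eq, d.last_eq] at h1
  exact lt_irrefl a h1

/-- uniform partition -/
noncomputable def unifPartition {t : ℝ} (ht : 0 < t) (n : ℕ) (hn : 0 < n) : IntervalPartition 0 t where
  n := n
  points := fun i => (min i n : ℕ) * t / n
  first_eq := by simp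
  last_eq := by field_simp; simp
  increasing := by
    intro i hi
    show ((min i n : ℕ) : ℝ) * t / n < ((min (i+1) n : ℕ) : ℝ) * t / n
    have h1 : (min i n : ℕ) = i := by omega
    have h2 : (min (i+1) n : ℕ) = i + 1 := by omega
    rw [h1, h2]
    have hn' : (0:ℝ) < n := by exact_mod_cast hn
    apply div_lt_div_of_pos_right ?_ hn'
    have : (i:ℝ) < (i:ℝ) + 1 := by linarith
    push_cast
    nlinarith

lemma unifPartition_mesh {t : ℝ} (ht : 0 < t) (n : ℕ) (hn : 0 < n) (i : ℕ) (hi : i < n) :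
    (unifPartition ht n hn).points (i+1) - (unifPartition ht n hn).points i = t / n := by
  show ((min (i+1) n : ℕ) : ℝ) * t / n - ((min i n : ℕ) : ℝ) * t / n = t / n
  have h1 : (min i n : ℕ) = i := by omega
  have h2 : (min (i+1) n : ℕ) = i + 1 := by omega
  rw [h1, h2]
  push_cast
  ring

/-- a fine partition exists -/
lemma exists_fine_partition {t δ : ℝ} (ht : 0 ≤ t) (hδ : 0 < δ) :
    ∃ d : IntervalPartition 0 t, ∀ i, i < d.n → d.points (i+1) - d.points i < δ := by
  rcases eq_or_lt_of_le ht with rfl | ht'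
  · exact ⟨⟨0, fun _ => 0, rfl, rfl, fun i hi => absurd hi (Nat.not_lt_zero i)⟩,
      fun i hi => absurd hi (Nat.not_lt_zero i)⟩
  · obtain ⟨n, hn⟩ := exists_nat_gt (t / δ)
    have hn0 : 0 < n := by
      by_contra h
      push_neg at h
      interval_cases n
      simp at hn
      nlinarith [div_pos ht' hδ]
    refine ⟨unifPartition ht' n hn0, fun i hi => ?_⟩
    rw [unifPartition_mesh ht' n hn0 i hi]
    rw [div_lt_iff₀ (by exact_mod_cast hn0)]
    calc t = (t/δ) * δ := by field_simp
    _ < n * δ := by apply mul_lt_mul_of_pos_right hn hδ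
    _ = δ * n := by ring

section LCS

variable {X : Type*} [AddCommGroup X] [Module ℝ X] [UniformSpace X] [IsUniformAddGroup X]
    [ContinuousSMul ℝ X] [LocallyConvexSpace ℝ X]

lemma lem_tendsto_iff {α : Type*} {F : α → X} {l : Filter α} {y : X} :
    Filter.Tendsto F l (𝓝 y) ↔
    ∀ q : Seminorm ℝ X, Continuous ⇑q → Filter.Tendsto (fun a => q (F a - y)) l (𝓝 0) := by
  constructor
  · intro h q hq
    have : Filter.Tendsto (fun a => F a - y) l (𝓝 0) := by
      simpa using h.sub (tendsto_const_nhds (x := y))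
    have h' := (hq.tendsto 0).comp this; rw [map_zero] at h'; exact h'
  · intro h
    rw [(with_gaugeSeminormFamily (𝕜 := ℝ) (E := X)).tendsto_nhds]
    intro i ε hε
    exact (h _ ((with_gaugeSeminormFamily (𝕜 := ℝ) (E := X)).continuous_seminorm i)).eventually
      (eventually_lt_nhds hε)

lemma lem_eq_zero [T2Space X] {y : X}
    (h : ∀ q : Seminorm ℝ X, Continuous ⇑q → q y = 0) : y = 0 := by
  by_contra hy
  obtain ⟨i, hi⟩ := (with_gaugeSeminormFamily (𝕜 := ℝ) (E := X)).separating_of_T1 y hy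
  exact hi (h _ ((with_gaugeSeminormFamily (𝕜 := ℝ) (E := X)).continuous_seminorm i))

/-- Uniqueness of the Riemann integral. -/
lemma isRiemannIntegral_unique [T2Space X] {g : ℝ → X} {t : ℝ} (ht : 0 ≤ t) {y₁ y₂ : X}
    (h₁ : IsRiemannIntegral g 0 t y₁) (h₂ : IsRiemannIntegral g 0 t y₂) : y₁ = y₂ := by
  rw [← sub_eq_zero]
  apply lem_eq_zero
  intro q hq
  have key : ∀ ε : ℝ, 0 < ε → q (y₁ - y₂) < ε := by
    intro ε hε
    obtain ⟨δ₁, hδ₁, H₁⟩ := h₁ q hq (ε/2) (by linarith)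
    obtain ⟨δ₂, hδ₂, H₂⟩ := h₂ q hq (ε/2) (by linarith)
    obtain ⟨d, hd⟩ := exists_fine_partition ht (lt_min hδ₁ hδ₂)
    have hc : ∀ i, i < d.n → d.points i ∈ Set.Icc (d.points i) (d.points (i+1)) :=
      fun i hi => ⟨le_rfl, le_of_lt (d.increasing i hi)⟩
    have e₁ := H₁ d (fun i => d.points i)
      (fun i hi => lt_of_lt_of_le (hd i hi) (min_le_left _ _)) hc
    have e₂ := H₂ d (fun i => d.points i)
      (fun i hi => lt_of_lt_of_le (hd i hi) (min_le_right _ _)) hc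
    set S := ∑ i ∈ Finset.range d.n, (d.points (i + 1) - d.points i) • g (d.points i) with hS
    have key2 : q (y₁ - y₂) ≤ q (S - y₂) + q (S - y₁) := by
      have h4 : y₁ - y₂ = (S - y₂) - (S - y₁) := by abel
      rw [h4]
      exact map_sub_le_add q _ _
    linarith
  have h0 := apply_nonneg q (y₁ - y₂)
  by_contra hne
  exact absurd (key _ (lt_of_le_of_ne h0 (Ne.symm hne))) (lt_irrefl _)

lemma riemannIntegral_eq [T2Space X] {g : ℝ → X} {t : ℝ} (ht : 0 ≤ t) {y : X}
    (h : IsRiemannIntegral g 0 t y) : riemannIntegral g 0 t = y := by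
  have hex : ∃ z, IsRiemannIntegral g 0 t z := ⟨y, h⟩
  rw [riemannIntegral, dif_pos hex]
  exact isRiemannIntegral_unique ht hex.choose_spec h

end LCS

end Aux
open scoped Uniformity
set_option linter.unusedSectionVars false

section SG

variable {X : Type*} [AddCommGroup X] [Module ℝ X] [UniformSpace X] [IsUniformAddGroup X]
    [ContinuousSMul ℝ X] [LocallyConvexSpace ℝ X]
variable (T : ℝ → X →L[ℝ] X)

lemma sg_comm (hT : IsSCLESemigroup T) {s t : ℝ} (hs : 0 ≤ s) (ht : 0 ≤ t) (x : X) :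
    T s (T t x) = T t (T s x) := by
  have h1 := hT.2.1 s t hs ht
  have h2 := hT.2.1 t s ht hs
  calc T s (T t x) = T (s + t) x := by rw [h1]; rfl
  _ = T (t + s) x := by rw [add_comm]
  _ = T t (T s x) := by rw [h2]; rfl

lemma genDomain_tendsto {x : X} (hx : x ∈ genDomain T) :
    Filter.Tendsto (fun h : ℝ => h⁻¹ • (T h x - x)) (𝓝[>] (0:ℝ)) (𝓝 (generator T x)) := by
  have h' : ∃ y, Filter.Tendsto (fun t : ℝ => t⁻¹ • (T t x - x)) (𝓝[>] (0:ℝ)) (𝓝 y) := hx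
  rw [generator, dif_pos h']
  exact h'.choose_spec

lemma generator_eq [T2Space X] {x y : X}
    (hx : Filter.Tendsto (fun h : ℝ => h⁻¹ • (T h x - x)) (𝓝[>] (0:ℝ)) (𝓝 y)) :
    generator T x = y :=
  tendsto_nhds_unique (genDomain_tendsto T ⟨y, hx⟩) hx

lemma sg_gen_comm [T2Space X] (hT : IsSCLESemigroup T) {x : X} (hx : x ∈ genDomain T)
    {τ : ℝ} (hτ : 0 ≤ τ) :
    T τ x ∈ genDomain T ∧ generator T (T τ x) = T τ (generator T x) := by
  have key : Filter.Tendsto (fun h : ℝ => h⁻¹ • (T h (T τ x) - T τ x)) (𝓝[>] (0:ℝ))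
      (𝓝 (T τ (generator T x))) := by
    have h2 : Filter.Tendsto (fun h : ℝ => T τ (h⁻¹ • (T h x - x))) (𝓝[>] (0:ℝ))
        (𝓝 (T τ (generator T x))) :=
      ((T τ).continuous.tendsto _).comp (genDomain_tendsto T hx)
    apply h2.congr' ∘ eventually_nhdsWithin_of_forall
    intro h hh
    rw [sg_comm T hT (le_of_lt hh) hτ x, ← map_sub, ← map_smul]
  exact ⟨⟨_, key⟩, generator_eq T key⟩

lemma lem_moving (hT : IsSCLESemigroup T) {r : ℝ} (hr : 0 ≤ r) {α : Type*} {l : Filter α}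
    {τ : α → ℝ} {w : α → X} {τ₀ : ℝ} {w₀ : X}
    (hτ : Filter.Tendsto τ l (𝓝 τ₀)) (hmem : ∀ᶠ a in l, τ a ∈ Set.Icc (0:ℝ) r)
    (hτ₀ : τ₀ ∈ Set.Icc (0:ℝ) r) (hw : Filter.Tendsto w l (𝓝 w₀)) :
    Filter.Tendsto (fun a => T (τ a) (w a)) l (𝓝 (T τ₀ w₀)) := by
  rw [lem_tendsto_iff]
  intro q hq
  obtain ⟨p, hp, C, hC, hbound⟩ := hT.2.2.2 q hq r hr
  have h2 : Filter.Tendsto (fun a => T (τ a) w₀) l (𝓝 (T τ₀ w₀)) := by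
    have hcont : ContinuousWithinAt (fun s => T s w₀) (Set.Ici (0:ℝ)) τ₀ :=
      (hT.2.2.1 w₀) τ₀ hτ₀.1
    exact hcont.tendsto.comp (tendsto_nhdsWithin_iff.mpr
      ⟨hτ, hmem.mono fun a ha => ha.1⟩)
  have h2q := lem_tendsto_iff.mp h2 q hq
  have h1q : Filter.Tendsto (fun a => C * p (w a - w₀)) l (𝓝 0) := by
    simpa using (lem_tendsto_iff.mp hw p hp).const_mul C
  have hbd : ∀ᶠ a in l,
      q (T (τ a) (w a) - T τ₀ w₀) ≤ C * p (w a - w₀) + q (T (τ a) w₀ - T τ₀ w₀) := by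
    filter_upwards [hmem] with a ha
    have hsplit : T (τ a) (w a) - T τ₀ w₀
        = T (τ a) (w a - w₀) + (T (τ a) w₀ - T τ₀ w₀) := by
      rw [map_sub]; abel
    rw [hsplit]
    exact le_trans (map_add_le_add q _ _)
      (add_le_add (hbound (τ a) ha (w a - w₀)) le_rfl)
  exact squeeze_zero' (Filter.Eventually.of_forall fun a => apply_nonneg q _) hbd
    (by simpa using h1q.add h2q)

lemma lem_conv_cont (hT : IsSCLESemigroup T) {r : ℝ} {f : ℝ → X}
    (hf : ContinuousOn f (Set.Icc (0:ℝ) r)) {t : ℝ} (ht : t ∈ Set.Icc (0:ℝ) r) :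
    ContinuousOn (fun s => T (t - s) (f s)) (Set.Icc (0:ℝ) t) := by
  intro s₀ hs₀
  have hτ : Filter.Tendsto (fun s => t - s) (𝓝[Set.Icc (0:ℝ) t] s₀) (𝓝 (t - s₀)) :=
    ((continuous_const.sub continuous_id).tendsto s₀).mono_left nhdsWithin_le_nhds
  have hmem : ∀ᶠ s in 𝓝[Set.Icc (0:ℝ) t] s₀, t - s ∈ Set.Icc (0:ℝ) r := by
    filter_upwards [self_mem_nhdsWithin] with s hs
    exact ⟨by linarith [hs.2], by linarith [hs.1, ht.2]⟩
  have hw : Filter.Tendsto f (𝓝[Set.Icc (0:ℝ) t] s₀) (𝓝 (f s₀)) :=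
    (hf s₀ ⟨hs₀.1, le_trans hs₀.2 ht.2⟩).mono_left
      (nhdsWithin_mono s₀ (Set.Icc_subset_Icc le_rfl ht.2))
  exact lem_moving T hT (ht.1.trans ht.2) hτ hmem
    ⟨sub_nonneg.2 hs₀.2, by linarith [hs₀.1, ht.2]⟩ hw

/-- uniform continuity on a compact interval w.r.t. a continuous seminorm -/
lemma lem_unif_cont {g : ℝ → X} {a b : ℝ} (hg : ContinuousOn g (Set.Icc a b))
    {q : Seminorm ℝ X} (hq : Continuous ⇑q) {ε : ℝ} (hε : 0 < ε) :
    ∃ δ : ℝ, 0 < δ ∧ ∀ s ∈ Set.Icc a b, ∀ s' ∈ Set.Icc a b, |s - s'| < δ →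
      q (g s - g s') < ε := by
  have huc : UniformContinuousOn g (Set.Icc a b) :=
    isCompact_Icc.uniformContinuousOn_of_continuous hg
  have hU : {z : X × X | q (z.2 - z.1) < ε} ∈ 𝓤 X := by
    rw [uniformity_eq_comap_nhds_zero X]
    have hop : IsOpen {z : X | q z < ε} := isOpen_lt hq continuous_const
    exact Filter.mem_comap.mpr ⟨{z : X | q z < ε}, hop.mem_nhds (by simp [hε]),
      fun z hz => hz⟩
  have hmem := huc hU
  rw [Filter.mem_map, Filter.mem_inf_principal] at hmem
  obtain ⟨δ, hδ, H⟩ := Metric.mem_uniformity_dist.mp hmem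
  refine ⟨δ, hδ, fun s hs s' hs' hss => ?_⟩
  have h1 : dist s s' < δ := by rwa [Real.dist_eq]
  have h2 := H h1 (Set.mk_mem_prod hs hs')
  have h3 : q (g s - g s') = q (g s' - g s) := by rw [← neg_sub, map_neg_eq_map]
  rw [h3]
  exact h2

end SG
section MVT

variable {X : Type*} [AddCommGroup X] [Module ℝ X] [UniformSpace X] [IsUniformAddGroup X]
    [ContinuousSMul ℝ X] [LocallyConvexSpace ℝ X]

lemma lem_mvt {g Φ : ℝ → X} {a b lo hi : ℝ} (hab : a ≤ b) (hloa : lo ≤ a) (hbhi : b ≤ hi)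
    (hg : ContinuousOn g (Set.Icc lo hi))
    (hd : ∀ σ ∈ Set.Icc a b, HasDerivWithinSetLC g (Φ σ) (Set.Icc lo hi) σ)
    {q : Seminorm ℝ X} (hq : Continuous ⇑q) {M : ℝ}
    (hM : ∀ σ ∈ Set.Icc a b, q (Φ σ) ≤ M) :
    q (g b - g a) ≤ M * (b - a) := by
  rcases eq_or_lt_of_le hab with rfl | hab'
  · simp
  have hsub : Set.Icc a b ⊆ Set.Icc lo hi := Set.Icc_subset_Icc hloa hbhi
  have key : ∀ ε : ℝ, 0 < ε → q (g b - g a) ≤ (M + ε) * (b - a) := by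
    intro ε hε
    set S := Set.Icc a b ∩
      (fun s => q (g s - g a) - (M + ε) * (s - a)) ⁻¹' (Set.Iic 0) with hSdef
    have haS : a ∈ S := ⟨⟨le_rfl, hab⟩, by simp⟩
    have hφ : ContinuousOn (fun s => q (g s - g a) - (M + ε) * (s - a)) (Set.Icc a b) := by
      apply ContinuousOn.sub
      · exact hq.comp_continuousOn (((hg.mono hsub).sub continuousOn_const))
      · exact (continuous_const.mul (continuous_id.sub continuous_const)).continuousOn
    have hScl : IsClosed S := hφ.preimage_isClosed_of_isClosed isClosed_Icc isClosed_Iic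
    have hScomp : IsCompact S :=
      isCompact_Icc.of_isClosed_subset hScl Set.inter_subset_left
    have hσS : sSup S ∈ S := hScomp.sSup_mem ⟨a, haS⟩
    set σ := sSup S with hσdef
    have hσmem : q (g σ - g a) ≤ (M + ε) * (σ - a) := by
      have := hσS.2
      simp only [Set.mem_preimage, Set.mem_Iic] at this
      linarith
    rcases eq_or_lt_of_le hσS.1.2 with hσb | hσb
    · rw [← hσb]; exact hσmem
    exfalso
    have hder := hd σ hσS.1
    have hnb : {z : X | q (z - Φ σ) < ε} ∈ 𝓝 (Φ σ) := by
      have hop : IsOpen {z : X | q (z - Φ σ) < ε} :=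
        isOpen_lt (hq.comp (continuous_id.sub continuous_const)) continuous_const
      exact hop.mem_nhds (by simp [hε])
    have hmem' := Filter.mem_map.mp (hder hnb)
    rw [mem_nhdsWithin] at hmem'
    obtain ⟨U, hUopen, hU0, hUsub⟩ := hmem'
    obtain ⟨ρ, hρ, hball⟩ := Metric.isOpen_iff.mp hUopen 0 hU0
    set h := min (ρ/2) (b - σ) with hhdef
    have hh0 : 0 < h := lt_min (by linarith) (by linarith)
    have hmemU : h ∈ U := by
      apply hball
      rw [Metric.mem_ball, Real.dist_eq, sub_zero, abs_of_pos hh0]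
      calc h ≤ ρ/2 := min_le_left _ _
      _ < ρ := by linarith
    have hσh : σ + h ∈ Set.Icc a b :=
      ⟨by linarith [hσS.1.1], by linarith [min_le_right (ρ/2) (b - σ)]⟩
    have hmemS' : h ∈ {h : ℝ | h ≠ 0 ∧ σ + h ∈ Set.Icc lo hi} :=
      ⟨ne_of_gt hh0, hsub hσh⟩
    have hq1 : q (h⁻¹ • (g (σ + h) - g σ) - Φ σ) < ε := hUsub ⟨hmemU, hmemS'⟩
    have hq2 : q (h⁻¹ • (g (σ + h) - g σ)) ≤ M + ε := by
      have hz : h⁻¹ • (g (σ + h) - g σ)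
          = (h⁻¹ • (g (σ + h) - g σ) - Φ σ) + Φ σ := by abel
      rw [hz]
      exact le_trans (map_add_le_add q _ _)
        (by have := hM σ hσS.1; linarith)
    have hq3 : q (g (σ + h) - g σ) ≤ (M + ε) * h := by
      have hz : g (σ + h) - g σ = h • (h⁻¹ • (g (σ + h) - g σ)) :=
        (smul_inv_smul₀ (ne_of_gt hh0) _).symm
      rw [hz, map_smul_eq_mul, Real.norm_eq_abs, abs_of_pos hh0, mul_comm h]
      exact mul_le_mul_of_nonneg_right hq2 (le_of_lt hh0)
    have hq4 : q (g (σ + h) - g a) ≤ (M + ε) * (σ + h - a) := by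
      have hz : g (σ + h) - g a = (g (σ + h) - g σ) + (g σ - g a) := by abel
      rw [hz]
      calc q _ ≤ q (g (σ + h) - g σ) + q (g σ - g a) := map_add_le_add q _ _
      _ ≤ (M + ε) * h + (M + ε) * (σ - a) := add_le_add hq3 hσmem
      _ = (M + ε) * (σ + h - a) := by ring
    have hin : σ + h ∈ S := ⟨hσh, by simp only [Set.mem_preimage, Set.mem_Iic]; linarith⟩
    have hle : σ + h ≤ σ := le_csSup ⟨b, fun s hs => hs.1.2⟩ hin
    linarith
  have hM0 : 0 ≤ M := le_trans (apply_nonneg q _) (hM a ⟨le_rfl, hab⟩)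
  refine le_of_forall_pos_le_add fun ε hε => ?_
  have := key (ε / (b - a)) (div_pos hε (by linarith))
  have hba : b - a ≠ 0 := by linarith
  calc q (g b - g a) ≤ (M + ε / (b - a)) * (b - a) := this
  _ = M * (b - a) + ε := by rw [add_mul, div_mul_cancel₀ _ hba]

lemma lem_mvt' {g Φ : ℝ → X} {a b lo hi c : ℝ} (hab : a ≤ b) (hloa : lo ≤ a) (hbhi : b ≤ hi)
    (hc : c ∈ Set.Icc a b)
    (hg : ContinuousOn g (Set.Icc lo hi))
    (hd : ∀ σ ∈ Set.Icc a b, HasDerivWithinSetLC g (Φ σ) (Set.Icc lo hi) σ)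
    {q : Seminorm ℝ X} (hq : Continuous ⇑q) {M : ℝ}
    (hM : ∀ σ ∈ Set.Icc a b, q (Φ σ - Φ c) ≤ M) :
    q (g b - g a - (b - a) • Φ c) ≤ M * (b - a) := by
  set G := fun s => g s - s • Φ c with hGdef
  have hGd : ∀ σ ∈ Set.Icc a b, HasDerivWithinSetLC G (Φ σ - Φ c) (Set.Icc lo hi) σ := by
    intro σ hσ
    have hder := hd σ hσ
    unfold HasDerivWithinSetLC at hder ⊢
    have hcong : ∀ h ∈ {h : ℝ | h ≠ 0 ∧ σ + h ∈ Set.Icc lo hi},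
        h⁻¹ • (g (σ + h) - g σ) - Φ c = h⁻¹ • (G (σ + h) - G σ) := by
      intro h hh
      have hGe : G (σ + h) - G σ = (g (σ + h) - g σ) - h • Φ c := by
        simp only [hGdef, add_smul]
        abel
      rw [hGe, smul_sub (h⁻¹) (g (σ + h) - g σ) (h • Φ c), smul_smul,
        inv_mul_cancel₀ hh.1, one_smul]
    have := (hder.sub (tendsto_const_nhds (x := Φ c))).congr'
      (eventually_nhdsWithin_of_forall hcong)
    simpa using this
  have hGcont : ContinuousOn G (Set.Icc lo hi) :=
    hg.sub ((continuous_id.smul continuous_const).continuousOn)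
  have := lem_mvt hab hloa hbhi hGcont hGd hq hM
  have hGba : G b - G a = g b - g a - (b - a) • Φ c := by
    simp only [hGdef, sub_smul]
    abel
  rwa [hGba] at this

end MVT
section Deriv

variable {X : Type*} [AddCommGroup X] [Module ℝ X] [UniformSpace X] [IsUniformAddGroup X]
    [ContinuousSMul ℝ X] [LocallyConvexSpace ℝ X] [T2Space X]
variable (T : ℝ → X →L[ℝ] X)

lemma lem_deriv (hT : IsSCLESemigroup T) {r : ℝ} {f u u' : ℝ → X}
    (hdom : ∀ s ∈ Set.Icc (0:ℝ) r, u s ∈ genDomain T)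
    (hC1 : IsC1On u u' (Set.Icc (0:ℝ) r))
    (heq : ∀ s ∈ Set.Icc (0:ℝ) r, u' s = generator T (u s) + f s)
    {t : ℝ} (ht : t ∈ Set.Icc (0:ℝ) r) {s₀ : ℝ} (hs₀ : s₀ ∈ Set.Icc (0:ℝ) t) :
    HasDerivWithinSetLC (fun s => T (t - s) (u s)) (T (t - s₀) (f s₀))
      (Set.Icc (0:ℝ) t) s₀ := by
  have hr0 : 0 ≤ r := ht.1.trans ht.2
  have hs₀r : s₀ ∈ Set.Icc (0:ℝ) r := ⟨hs₀.1, hs₀.2.trans ht.2⟩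
  have hus₀ : u s₀ ∈ genDomain T := hdom s₀ hs₀r
  have hτ₀mem : t - s₀ ∈ Set.Icc (0:ℝ) r := ⟨sub_nonneg.2 hs₀.2, by
    have := hs₀.1; have := ht.2; linarith⟩
  set S' := {h : ℝ | h ≠ 0 ∧ s₀ + h ∈ Set.Icc (0:ℝ) t} with hS'def
  set L := 𝓝[S'] (0:ℝ) with hLdef
  set yB := T (t - s₀) (generator T (u s₀)) with hyBdef
  -- basic eventual facts
  have hev : ∀ᶠ h in L, h ∈ S' := self_mem_nhdsWithin
  have hmemA : ∀ᶠ h in L, t - s₀ - h ∈ Set.Icc (0:ℝ) r := by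
    filter_upwards [hev] with h hh
    exact ⟨by linarith [hh.2.2], by linarith [hh.2.1, ht.2]⟩
  have hτA : Filter.Tendsto (fun h : ℝ => t - s₀ - h) L (𝓝 (t - s₀)) := by
    have : Filter.Tendsto (fun h : ℝ => t - s₀ - h) (𝓝 (0:ℝ)) (𝓝 (t - s₀ - 0)) :=
      (continuous_const.sub continuous_id).tendsto 0
    simpa using this.mono_left nhdsWithin_le_nhds
  -- the A part
  have hwA : Filter.Tendsto (fun h : ℝ => h⁻¹ • (u (s₀ + h) - u s₀)) L (𝓝 (u' s₀)) := by
    have := hC1.2.2 s₀ hs₀r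
    exact this.mono_left (nhdsWithin_mono 0 (fun h hh =>
      ⟨hh.1, ⟨hh.2.1, hh.2.2.trans ht.2⟩⟩))
  have hA : Filter.Tendsto (fun h : ℝ => T (t - s₀ - h) (h⁻¹ • (u (s₀ + h) - u s₀))) L
      (𝓝 (T (t - s₀) (u' s₀))) :=
    lem_moving T hT hr0 hτA hmemA hτ₀mem hwA
  -- the B part
  set B := fun h : ℝ => h⁻¹ • (T (t - s₀ - h) (u s₀) - T (t - s₀) (u s₀)) with hBdef
  have hsplit : S' = (S' ∩ Set.Ioi 0) ∪ (S' ∩ Set.Iio 0) := by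
    ext h
    constructor
    · intro hh
      rcases lt_or_gt_of_ne hh.1 with h1 | h1
      · exact Or.inr ⟨hh, h1⟩
      · exact Or.inl ⟨hh, h1⟩
    · rintro (hh | hh) <;> exact hh.1
  have hLsup : L = 𝓝[S' ∩ Set.Ioi 0] (0:ℝ) ⊔ 𝓝[S' ∩ Set.Iio 0] (0:ℝ) := by
    rw [hLdef]
    nth_rewrite 1 [hsplit]
    exact nhdsWithin_union _ _ _
  -- positive side
  have hBp : Filter.Tendsto B (𝓝[S' ∩ Set.Ioi 0] (0:ℝ)) (𝓝 (-yB)) := by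
    have hgen' : Filter.Tendsto (fun h : ℝ => h⁻¹ • (T h (u s₀) - u s₀))
        (𝓝[S' ∩ Set.Ioi 0] (0:ℝ)) (𝓝 (generator T (u s₀))) :=
      (genDomain_tendsto T hus₀).mono_left (nhdsWithin_mono 0 Set.inter_subset_right)
    have hτp : Filter.Tendsto (fun h : ℝ => t - s₀ - h) (𝓝[S' ∩ Set.Ioi 0] (0:ℝ))
        (𝓝 (t - s₀)) := hτA.mono_left (nhdsWithin_mono 0 Set.inter_subset_left)
    have hmemp : ∀ᶠ h in 𝓝[S' ∩ Set.Ioi 0] (0:ℝ), t - s₀ - h ∈ Set.Icc (0:ℝ) r := by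
      filter_upwards [self_mem_nhdsWithin] with h hh
      exact ⟨by linarith [hh.1.2.2], by linarith [hh.1.2.1, ht.2]⟩
    have hmv := lem_moving T hT hr0 hτp hmemp hτ₀mem hgen'
    refine hmv.neg.congr' (eventually_nhdsWithin_of_forall ?_)
    intro h hh
    have hhpos : 0 < h := hh.2
    have hTsum : T (t - s₀) (u s₀) = T (t - s₀ - h) (T h (u s₀)) := by
      have h2 := hT.2.1 (t - s₀ - h) h (by linarith [hh.1.2.2]) hhpos.le
      have h3 : t - s₀ - h + h = t - s₀ := by ring
      rw [h3] at h2
      rw [h2]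
      rfl
    rw [map_smul, map_sub, ← hTsum]
    simp only [hBdef]
    module
  -- negative side
  have hymem := sg_gen_comm T hT hus₀ hτ₀mem.1
  have hBm : Filter.Tendsto B (𝓝[S' ∩ Set.Iio 0] (0:ℝ)) (𝓝 (-yB)) := by
    have hneg : Filter.Tendsto (fun h : ℝ => -h) (𝓝[S' ∩ Set.Iio 0] (0:ℝ))
        (𝓝[>] (0:ℝ)) := by
      rw [tendsto_nhdsWithin_iff]
      constructor
      · have : Filter.Tendsto (fun h : ℝ => -h) (𝓝 (0:ℝ)) (𝓝 (-0:ℝ)) :=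
          continuous_neg.tendsto 0
        simpa using this.mono_left nhdsWithin_le_nhds
      · filter_upwards [self_mem_nhdsWithin] with h hh
        simpa using hh.2
    have hcomp := (genDomain_tendsto T hymem.1).comp hneg
    have hyeq : generator T (T (t - s₀) (u s₀)) = yB := hymem.2
    rw [hyeq] at hcomp
    refine hcomp.neg.congr' (eventually_nhdsWithin_of_forall ?_)
    intro h hh
    have hhneg : h < 0 := hh.2
    have hTsum : T (t - s₀ - h) (u s₀) = T (-h) (T (t - s₀) (u s₀)) := by
      have h2 := hT.2.1 (-h) (t - s₀) (by linarith) hτ₀mem.1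
      have h3 : -h + (t - s₀) = t - s₀ - h := by ring
      rw [h3] at h2
      rw [h2]
      rfl
    show -((-h)⁻¹ • (T (-h) (T (t - s₀) (u s₀)) - T (t - s₀) (u s₀))) = B h
    simp only [hBdef]
    rw [hTsum, inv_neg]
    module
  have hB : Filter.Tendsto B L (𝓝 (-yB)) := by
    rw [hLsup]
    exact hBp.sup hBm
  -- combine
  have hsum := hA.add hB
  have hval : T (t - s₀) (u' s₀) + -yB = T (t - s₀) (f s₀) := by
    rw [heq s₀ hs₀r, map_add, hyBdef]
    abel
  rw [hval] at hsum
  unfold HasDerivWithinSetLC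
  apply hsum.congr
  intro h
  rw [hBdef]
  simp only [map_smul, map_sub]
  rw [← smul_add]
  congr 1
  have he : t - (s₀ + h) = t - s₀ - h := by ring
  rw [he]
  abel

end Deriv
section Main

variable {X : Type*} [AddCommGroup X] [Module ℝ X] [UniformSpace X] [IsUniformAddGroup X]
    [ContinuousSMul ℝ X] [LocallyConvexSpace ℝ X] [T2Space X]
variable (T : ℝ → X →L[ℝ] X)

lemma seminorm_sum_le {ι : Type*} (q : Seminorm ℝ X) (s : Finset ι) (f : ι → X) :
    q (∑ i ∈ s, f i) ≤ ∑ i ∈ s, q (f i) := by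
  induction s using Finset.cons_induction with
  | empty => simp
  | cons a s ha ih =>
    rw [Finset.sum_cons, Finset.sum_cons]
    exact le_trans (map_add_le_add q _ _) (by linarith)

lemma lem_repr (hT : IsSCLESemigroup T) {r : ℝ} {f : ℝ → X}
    (hf : ContinuousOn f (Set.Icc (0:ℝ) r)) {x : X} {u : ℝ → X}
    (hu : IsStrictSolution T f x r u) {t : ℝ} (ht : t ∈ Set.Icc (0:ℝ) r) :
    IsRiemannIntegral (fun s => T (t - s) (f s)) 0 t (u t - T t x) := by
  obtain ⟨hu0, hdom, u', hC1, heq⟩ := hu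
  rcases eq_or_lt_of_le ht.1 with ht0 | ht0
  · -- t = 0
    subst ht0
    have hzero : u 0 - T 0 x = 0 := by rw [hu0, hT.1]; simp
    rw [hzero]
    intro q hq ε hε
    refine ⟨1, one_pos, fun d c _ _ => ?_⟩
    have hn := d.n_eq_zero
    simp [hn, hε]
  -- t > 0
  intro q hq ε hε
  set g := fun s => T (t - s) (u s) with hgdef
  set Φ := fun s => T (t - s) (f s) with hΦdef
  have hΦcont : ContinuousOn Φ (Set.Icc (0:ℝ) t) := lem_conv_cont T hT hf ht
  have hgcont : ContinuousOn g (Set.Icc (0:ℝ) t) := lem_conv_cont T hT hC1.1 ht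
  have hM : 0 < ε / (2 * t) := by positivity
  obtain ⟨δ, hδ, hunif⟩ := lem_unif_cont hΦcont hq hM
  refine ⟨δ, hδ, fun d c hmesh hc => ?_⟩
  have hpts : ∀ i, i ≤ d.n → d.points i ∈ Set.Icc (0:ℝ) t := fun i hi => d.mem_Icc' hi
  have key : ∀ i, i < d.n →
      q ((d.points (i+1) - d.points i) • Φ (c i)
        - (g (d.points (i+1)) - g (d.points i)))
      ≤ (ε / (2*t)) * (d.points (i+1) - d.points i) := by
    intro i hi
    have hab : d.points i ≤ d.points (i+1) := (d.increasing i hi).le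
    have hmem1 := hpts i hi.le
    have hmem2 := hpts (i+1) hi
    have hci := hc i hi
    have hder : ∀ σ ∈ Set.Icc (d.points i) (d.points (i+1)),
        HasDerivWithinSetLC g (Φ σ) (Set.Icc (0:ℝ) t) σ := by
      intro σ hσ
      exact lem_deriv T hT hdom hC1 heq ht
        ⟨hmem1.1.trans hσ.1, hσ.2.trans hmem2.2⟩
    have hMb : ∀ σ ∈ Set.Icc (d.points i) (d.points (i+1)),
        q (Φ σ - Φ (c i)) ≤ ε / (2*t) := by
      intro σ hσ
      have hσt : σ ∈ Set.Icc (0:ℝ) t := ⟨hmem1.1.trans hσ.1, hσ.2.trans hmem2.2⟩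
      have hcit : c i ∈ Set.Icc (0:ℝ) t := ⟨hmem1.1.trans hci.1, hci.2.trans hmem2.2⟩
      have habs : |σ - c i| < δ := by
        rw [abs_lt]
        constructor
        · have := hmesh i hi; have := hci.1; have := hci.2
          have := hσ.1; have := hσ.2; linarith
        · have := hmesh i hi; have := hci.1; have := hci.2
          have := hσ.1; have := hσ.2; linarith
      exact (hunif σ hσt (c i) hcit habs).le
    have hmvt := lem_mvt' hab hmem1.1 hmem2.2 hci hgcont hder hq hMb
    have hswap : (d.points (i+1) - d.points i) • Φ (c i)
        - (g (d.points (i+1)) - g (d.points i))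
        = -(g (d.points (i+1)) - g (d.points i)
            - (d.points (i+1) - d.points i) • Φ (c i)) := by abel
    rw [hswap, map_neg_eq_map]
    exact hmvt
  have htele : ∑ i ∈ Finset.range d.n, (g (d.points (i+1)) - g (d.points i))
      = u t - T t x := by
    rw [Finset.sum_range_sub (fun i => g (d.points i))]
    rw [d.last_eq, d.first_eq]
    have e1 : g t = u t := by
      simp only [hgdef]
      rw [sub_self, hT.1]
      rfl
    have e2 : g 0 = T t x := by
      simp only [hgdef]
      rw [sub_zero, hu0]
    rw [e1, e2]
  have hsplit : (∑ i ∈ Finset.range d.n,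
        (d.points (i+1) - d.points i) • T (t - c i) (f (c i))) - (u t - T t x)
      = ∑ i ∈ Finset.range d.n, ((d.points (i+1) - d.points i) • Φ (c i)
          - (g (d.points (i+1)) - g (d.points i))) := by
    rw [Finset.sum_sub_distrib, htele]
  rw [hsplit]
  calc q (∑ i ∈ Finset.range d.n, ((d.points (i+1) - d.points i) • Φ (c i)
          - (g (d.points (i+1)) - g (d.points i))))
      ≤ ∑ i ∈ Finset.range d.n, q ((d.points (i+1) - d.points i) • Φ (c i)
          - (g (d.points (i+1)) - g (d.points i))) := seminorm_sum_le q _ _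
  _ ≤ ∑ i ∈ Finset.range d.n, (ε / (2*t)) * (d.points (i+1) - d.points i) :=
      Finset.sum_le_sum (fun i hi => key i (Finset.mem_range.mp hi))
  _ = (ε / (2*t)) * t := by
      rw [← Finset.mul_sum, Finset.sum_range_sub (fun i => d.points i),
        d.last_eq, d.first_eq, sub_zero]
  _ = ε / 2 := by field_simp
  _ < ε := by linarith

lemma lem_sgConv (hT : IsSCLESemigroup T) {r : ℝ} {f : ℝ → X}
    (hf : ContinuousOn f (Set.Icc (0:ℝ) r)) {x : X} {u : ℝ → X}
    (hu : IsStrictSolution T f x r u) {t : ℝ} (ht : t ∈ Set.Icc (0:ℝ) r) :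
    u t = T t x + sgConv T f t := by
  have h := lem_repr T hT hf hu ht
  have : sgConv T f t = u t - T t x := riemannIntegral_eq ht.1 h
  rw [this]
  abel

end Main
theorem stmt4 {X : Type*} [AddCommGroup X] [Module ℝ X] [UniformSpace X] [IsUniformAddGroup X]
    [ContinuousSMul ℝ X] [LocallyConvexSpace ℝ X] [T2Space X]
    (r : ℝ) (hr : 0 < r) (hX : SequentiallyComplete X)
    (T : ℝ → X →L[ℝ] X) (hT : IsSCLESemigroup T)
    (f : ℝ → X) (hf : ContinuousOn f (Set.Icc (0:ℝ) r)) (x : X)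
    (u : ℝ → X) (hu : IsStrictSolution T f x r u) :
    x ∈ genDomain T ∧
    ContinuousOn (fun t => generator T (u t)) (Set.Icc (0:ℝ) r) ∧
    (∀ v : ℝ → X, IsStrictSolution T f x r v → ∀ t ∈ Set.Icc (0:ℝ) r, v t = u t) ∧
    (∀ t ∈ Set.Icc (0:ℝ) r, u t = T t x + sgConv T f t) := by
  refine ⟨?_, ?_, ?_, ?_⟩
  · have h := hu.2.1 0 ⟨le_rfl, hr.le⟩
    rwa [hu.1] at h
  · obtain ⟨hu0, hdom, u', hC1, heq⟩ := hu
    have hcont : ContinuousOn (fun t => u' t - f t) (Set.Icc (0:ℝ) r) := hC1.2.1.sub hf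
    refine hcont.congr fun t htmem => ?_
    simp only [heq t htmem]
    abel
  · intro v hv t htmem
    rw [lem_sgConv T hT hf hv htmem, lem_sgConv T hT hf hu htmem]
  · intro t htmem
    exact lem_sgConv T hT hf hu htmem
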